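/- Fix σ̄ > 0, μ̄ ∈ ℝ, k ∈ ℕ, and C̄ > 0. For every s > 0 and all x > 0: C̄·x^k·g(x; μ̄, σ̄) ≤ C̃(s)·g(x; μ̃(s), σ̄), where g(x;μ,σ) is the Gaussian pdf, μ̃(s) = s − σ̄²·((s−μ̄)/σ̄² − k/s), and C̃(s) = C̄·exp(−(s−μ̄)²/(2σ̄²) + k·log s + (σ̄²/2)·((s−μ̄)/σ̄² − k/s)²). Moreover equality holds at x = s. -/

import Mathlib

noncomputable def gauss (μ σ x : ℝ) : ℝ :=
  (1 / Real.sqrt (2 * Real.pi * σ ^ 2)) * Real.exp (-(x - μ) ^ 2 / (2 * σ ^ 2))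

lemma expo_id (σ μ : ℝ) (hσ : 0 < σ) (k : ℕ) (s x : ℝ) (hs : 0 < s) :
    (-(s - μ) ^ 2 / (2 * σ ^ 2) + (k : ℝ) * Real.log s
        + (σ ^ 2 / 2) * ((s - μ) / σ ^ 2 - (k : ℝ) / s) ^ 2)
      + (-(x - (s - σ ^ 2 * ((s - μ) / σ ^ 2 - (k : ℝ) / s))) ^ 2 / (2 * σ ^ 2))
      - ((k : ℝ) * Real.log x + (-(x - μ) ^ 2 / (2 * σ ^ 2)))
      = (k : ℝ) * (x / s - 1) - (k : ℝ) * (Real.log x - Real.log s) := by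
  have hσ2 : σ ^ 2 ≠ 0 := by positivity
  have hs' : s ≠ 0 := ne_of_gt hs
  field_simp
  ring

lemma expo_ineq (σ μ : ℝ) (hσ : 0 < σ) (k : ℕ) (s x : ℝ) (hs : 0 < s) (hx : 0 < x) :
    (k : ℝ) * Real.log x + (-(x - μ) ^ 2 / (2 * σ ^ 2)) ≤
      (-(s - μ) ^ 2 / (2 * σ ^ 2) + (k : ℝ) * Real.log s
        + (σ ^ 2 / 2) * ((s - μ) / σ ^ 2 - (k : ℝ) / s) ^ 2)
      + (-(x - (s - σ ^ 2 * ((s - μ) / σ ^ 2 - (k : ℝ) / s))) ^ 2 / (2 * σ ^ 2)) := by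
  have hlog : Real.log x - Real.log s ≤ x / s - 1 := by
    rw [← Real.log_div hx.ne' hs.ne']
    exact Real.log_le_sub_one_of_pos (by positivity)
  have hk : (0 : ℝ) ≤ (k : ℝ) := Nat.cast_nonneg k
  have h2 := mul_le_mul_of_nonneg_left hlog hk
  have hid := expo_id σ μ hσ k s x hs
  linarith

lemma gauss_repr (μ σ x C : ℝ) (hσ : 0 < σ) (hx : 0 < x) (k : ℕ) :
    C * x ^ k * gauss μ σ x
      = C * (1 / Real.sqrt (2 * Real.pi * σ ^ 2))
        * Real.exp ((k : ℝ) * Real.log x + (-(x - μ) ^ 2 / (2 * σ ^ 2))) := by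
  have hxk : x ^ k = Real.exp ((k : ℝ) * Real.log x) := by
    rw [Real.exp_nat_mul, Real.exp_log hx]
  rw [gauss, hxk, Real.exp_add]
  ring

theorem stmt16 (σ μ C : ℝ) (hσ : 0 < σ) (hC : 0 < C) (k : ℕ) (s : ℝ) (hs : 0 < s) :
    let μt : ℝ := s - σ ^ 2 * ((s - μ) / σ ^ 2 - (k : ℝ) / s)
    let Ct : ℝ := C * Real.exp (-(s - μ) ^ 2 / (2 * σ ^ 2) + (k : ℝ) * Real.log s
      + (σ ^ 2 / 2) * ((s - μ) / σ ^ 2 - (k : ℝ) / s) ^ 2)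
    (∀ x > (0 : ℝ), C * x ^ k * gauss μ σ x ≤ Ct * gauss μt σ x) ∧
    C * s ^ k * gauss μ σ s = Ct * gauss μt σ s := by
  intro μt Ct
  have hc : 0 < 1 / Real.sqrt (2 * Real.pi * σ ^ 2) := by
    have : 0 < 2 * Real.pi * σ ^ 2 := by positivity
    positivity
  have hrhs : ∀ x : ℝ, Ct * gauss μt σ x
      = C * (1 / Real.sqrt (2 * Real.pi * σ ^ 2))
        * Real.exp ((-(s - μ) ^ 2 / (2 * σ ^ 2) + (k : ℝ) * Real.log s
            + (σ ^ 2 / 2) * ((s - μ) / σ ^ 2 - (k : ℝ) / s) ^ 2)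
          + (-(x - μt) ^ 2 / (2 * σ ^ 2))) := by
    intro x
    simp only [Ct, gauss, Real.exp_add]
    ring
  constructor
  · intro x hx
    rw [gauss_repr μ σ x C hσ hx k, hrhs x]
    have := expo_ineq σ μ hσ k s x hs hx
    have hCc : 0 ≤ C * (1 / Real.sqrt (2 * Real.pi * σ ^ 2)) := by positivity
    exact mul_le_mul_of_nonneg_left (Real.exp_le_exp.mpr this) hCc
  · rw [gauss_repr μ σ s C hσ hs k, hrhs s]
    congr 1
    have hid := expo_id σ μ hσ k s s hs
    have : s / s - 1 = 0 := by field_simp; ring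
    rw [this] at hid
    have : ((-(s - μ) ^ 2 / (2 * σ ^ 2) + (k : ℝ) * Real.log s
        + (σ ^ 2 / 2) * ((s - μ) / σ ^ 2 - (k : ℝ) / s) ^ 2)
      + (-(s - μt) ^ 2 / (2 * σ ^ 2)))
      = ((k : ℝ) * Real.log s + (-(s - μ) ^ 2 / (2 * σ ^ 2))) := by
      simp only [μt]
      linarith
    rw [this]
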